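/- Let D, E ∈ C^{m×n}. There exists a matrix A ∈ C^{n×m} that is right (D,E)-invertible if and only if rank(E) ≤ rank(D). -/

import Mathlib

open Matrix

theorem stmt11 (n m : ℕ) (D E : Matrix (Fin m) (Fin n) ℂ) :
    (∃ A : Matrix (Fin n) (Fin m) ℂ, ∃ B : Matrix (Fin m) (Fin n) ℂ,
      E * A * B = E ∧ LinearMap.range B.mulVecLin ≤ LinearMap.range D.mulVecLin) ↔
    E.rank ≤ D.rank := by
  constructor
  · rintro ⟨A, B, hEAB, hB⟩
    calc E.rank = ((E * A) * B).rank := by rw [hEAB]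
      _ ≤ B.rank := Matrix.rank_mul_le_right _ _
      _ ≤ D.rank := Submodule.finrank_mono hB
  · intro hrank
    set f := E.mulVecLin with hf
    set g := D.mulVecLin with hg
    set r := Module.finrank ℂ (LinearMap.range f) with hr
    set s := Module.finrank ℂ (LinearMap.range g) with hs
    have hrs : r ≤ s := hrank
    rcases Nat.eq_zero_or_pos r with hr0 | hrpos
    · -- range f = ⊥, so E = 0
      have hbot : LinearMap.range f = ⊥ := Submodule.finrank_eq_zero.mp hr0
      have hE : E = 0 := by
        have hf0 : f = 0 := LinearMap.range_eq_bot.mp hbot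
        ext i k
        have : f (Pi.single k 1) = 0 := by rw [hf0]; rfl
        have h2 : E.mulVec (Pi.single k 1) = 0 := this
        have h3 := congrFun h2 i
        simpa [Matrix.mulVec_single] using h3
      refine ⟨0, 0, by simp [hE], by simp⟩
    · -- build injection j : range f →ₗ range g
      have hFDf : FiniteDimensional ℂ (LinearMap.range f) := inferInstance
      have hFDg : FiniteDimensional ℂ (LinearMap.range g) := inferInstance
      let bf : Module.Basis (Fin r) ℂ (LinearMap.range f) := Module.finBasis ℂ _
      let bg : Module.Basis (Fin s) ℂ (LinearMap.range g) := Module.finBasis ℂ _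
      -- surjection Fin s → Fin r
      let σ : Fin s → Fin r := fun i => if h : (i : ℕ) < r then ⟨i, h⟩ else ⟨0, hrpos⟩
      have hσ : Function.Surjective σ := by
        intro j
        refine ⟨⟨j, lt_of_lt_of_le j.2 hrs⟩, ?_⟩
        simp [σ, j.2]
      let inc : (Fin r → ℂ) →ₗ[ℂ] (Fin s → ℂ) := LinearMap.funLeft ℂ ℂ σ
      have hinc : Function.Injective inc := LinearMap.funLeft_injective_of_surjective ℂ ℂ σ hσ
      let j : LinearMap.range f →ₗ[ℂ] LinearMap.range g :=
        (bg.equivFun.symm.toLinearMap) ∘ₗ inc ∘ₗ bf.equivFun.toLinearMap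
      have hj : Function.Injective j := by
        simp only [j, LinearMap.coe_comp, LinearEquiv.coe_coe]
        exact bg.equivFun.symm.injective.comp (hinc.comp bf.equivFun.injective)
      obtain ⟨j', hj'⟩ := j.exists_leftInverse_of_injective (LinearMap.ker_eq_bot.mpr hj)
      obtain ⟨π, hπ⟩ := (LinearMap.range g).subtype.exists_leftInverse_of_injective
        (Submodule.ker_subtype _)
      -- b : ℂ^n → ℂ^m
      let b : (Fin n → ℂ) →ₗ[ℂ] (Fin m → ℂ) :=
        (LinearMap.range g).subtype ∘ₗ j ∘ₗ f.rangeRestrict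
      -- F' : ℂ^m → range f
      let F' : (Fin m → ℂ) →ₗ[ℂ] LinearMap.range f := j' ∘ₗ π
      obtain ⟨a, ha⟩ := Module.projective_lifting_property f.rangeRestrict F'
        f.surjective_rangeRestrict
      refine ⟨LinearMap.toMatrix' a, LinearMap.toMatrix' b, ?_, ?_⟩
      · -- E * A * B = E
        apply LinearMap.toMatrix'.symm.injective
        rw [LinearMap.toMatrix'_symm]
        rw [Matrix.toLin'_mul, Matrix.toLin'_mul, Matrix.toLin'_toMatrix',
          Matrix.toLin'_toMatrix']
        refine LinearMap.ext fun x => ?_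
        have hfab : f (a (b x)) = f x := by
          have h1 : f.rangeRestrict (a (b x)) = F' (b x) := by
            rw [← ha]; rfl
          have h2 : F' (b x) = f.rangeRestrict x := by
            show j' (π (b x)) = _
            have : π (b x) = j (f.rangeRestrict x) := by
              show π ((LinearMap.range g).subtype (j (f.rangeRestrict x))) = _
              rw [← LinearMap.comp_apply, hπ]; rfl
            rw [this, ← LinearMap.comp_apply, hj']; rfl
          have : ((f.rangeRestrict (a (b x))) : Fin m → ℂ) = f.rangeRestrict x := by
            rw [h1, h2]
          simpa using this
        simpa [Matrix.toLin'_apply', hf] using hfab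
      · -- range B ≤ range D
        have hBb : (LinearMap.toMatrix' b).mulVecLin = b := by
          rw [← Matrix.toLin'_apply', Matrix.toLin'_toMatrix']
        rw [hBb]
        rintro y ⟨x, rfl⟩
        exact ((j (f.rangeRestrict x)) : LinearMap.range g).2
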